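/- Let n, k ∈ ℕ with k ≥ 1, let r ∈ (0,1), and let y = (y_γ)_{γ∈ℕ^n_{2k}} be a real sequence with y₀ = 1 such that: the moment matrix M_k(y) is positive semidefinite; for every α ∈ {0,1}^n \ {0} with ⌈|α|/2⌉ ≤ k, the localizing matrix M_{k−⌈|α|/2⌉}(x^α · y) is positive semidefinite; and the localizing matrices M_{k−1}((r − (x₁+⋯+xₙ))·y) and M_{k−1}((r² − (x₁+⋯+xₙ)²)·y) are positive semidefinite. Then L_y(r^j − (x₁+⋯+xₙ)^j) ≥ 0 for every j = 1,…,2k, and Σ_{γ∈ℕ^n_{2k}, γ≠0} y_γ ≤ r/(1 − r). -/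

import Mathlib

open Matrix BigOperators

abbrev MIdx (n k : ℕ) : Type := {α : Fin n → ℕ // ∑ i, α i ≤ k}

noncomputable instance (n k : ℕ) : Fintype (MIdx n k) :=
  Fintype.ofInjective
    (fun a : MIdx n k => fun i : Fin n =>
      (⟨a.1 i, Nat.lt_succ_of_le
        ((Finset.single_le_sum (fun j _ => Nat.zero_le (a.1 j)) (Finset.mem_univ i)).trans
          a.2)⟩ : Fin (k + 1)))
    (fun a b h => Subtype.ext (funext fun i => congrArg Fin.val (congrFun h i)))

namespace Stmt14Aux

open MvPolynomial Finset

noncomputable def cc (n m : ℕ) (d : Fin n → ℕ) : ℝ :=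
  if ∑ i, d i = m then (Nat.multinomial Finset.univ d : ℝ) else 0

noncomputable def canonSum (n m : ℕ) (F : (Fin n → ℕ) → ℝ) : ℝ :=
  ∑ d ∈ Finset.piAntidiag Finset.univ m, (Nat.multinomial Finset.univ d : ℝ) * F d

noncomputable def Lf (n : ℕ) (F : (Fin n → ℕ) → ℝ) (p : MvPolynomial (Fin n) ℝ) : ℝ :=
  ∑ u ∈ p.support, p.coeff u * F ⇑u

lemma Lf_eq_sum {n : ℕ} {F : (Fin n → ℕ) → ℝ} {p : MvPolynomial (Fin n) ℝ}
    {s : Finset (Fin n →₀ ℕ)} (h : p.support ⊆ s) :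
    Lf n F p = ∑ u ∈ s, p.coeff u * F ⇑u :=
  Finset.sum_subset h (fun u _ hu => by
    rw [MvPolynomial.notMem_support_iff.mp hu, zero_mul])

lemma Lf_monomial {n : ℕ} {F : (Fin n → ℕ) → ℝ} (u : Fin n →₀ ℕ) (c : ℝ) :
    Lf n F (monomial u c) = c * F ⇑u := by
  by_cases hc : c = 0
  · simp [Lf, hc]
  · classical
    rw [Lf, MvPolynomial.support_monomial, if_neg hc, Finset.sum_singleton]
    simp [MvPolynomial.coeff_monomial]

lemma Lf_add {n : ℕ} {F : (Fin n → ℕ) → ℝ} (p q : MvPolynomial (Fin n) ℝ) :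
    Lf n F (p + q) = Lf n F p + Lf n F q := by
  classical
  rw [Lf_eq_sum (s := p.support ∪ q.support) MvPolynomial.support_add,
      Lf_eq_sum (s := p.support ∪ q.support) Finset.subset_union_left,
      Lf_eq_sum (s := p.support ∪ q.support) Finset.subset_union_right,
      ← Finset.sum_add_distrib]
  exact Finset.sum_congr rfl fun u _ => by rw [MvPolynomial.coeff_add, add_mul]

lemma Lf_sum {n : ℕ} {F : (Fin n → ℕ) → ℝ} {ι : Type*} (s : Finset ι)
    (g : ι → MvPolynomial (Fin n) ℝ) :
    Lf n F (∑ i ∈ s, g i) = ∑ i ∈ s, Lf n F (g i) := by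
  classical
  induction s using Finset.cons_induction with
  | empty => simp [Lf]
  | cons a s ha ih => rw [Finset.sum_cons, Finset.sum_cons, Lf_add, ih]

lemma coe_symm {n : ℕ} (d : Fin n → ℕ) : ⇑(Finsupp.equivFunOnFinite.symm d) = d :=
  Finsupp.equivFunOnFinite.apply_symm_apply d

lemma prodXpow {n : ℕ} (d : Fin n → ℕ) :
    (∏ i, (X i : MvPolynomial (Fin n) ℝ) ^ d i)
      = monomial (Finsupp.equivFunOnFinite.symm d) 1 := by
  classical
  calc ∏ i, (X i : MvPolynomial (Fin n) ℝ) ^ d i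
      = ∏ i, (X i : MvPolynomial (Fin n) ℝ) ^ ((Finsupp.equivFunOnFinite.symm d) i) :=
        Finset.prod_congr rfl fun i _ => by rw [coe_symm]
    _ = ∏ i ∈ (Finsupp.equivFunOnFinite.symm d).support,
          (X i : MvPolynomial (Fin n) ℝ) ^ ((Finsupp.equivFunOnFinite.symm d) i) :=
        (Finset.prod_subset (Finset.subset_univ _)
          (fun i _ hi => by rw [Finsupp.notMem_support_iff.mp hi, pow_zero])).symm
    _ = monomial (Finsupp.equivFunOnFinite.symm d) 1 := MvPolynomial.prod_X_pow_eq_monomial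

lemma Spow_repr (n m : ℕ) :
    ((∑ i, (X i : MvPolynomial (Fin n) ℝ)) ^ m)
      = ∑ d ∈ Finset.piAntidiag Finset.univ m,
          monomial (Finsupp.equivFunOnFinite.symm d) ((Nat.multinomial Finset.univ d : ℝ)) := by
  classical
  rw [Finset.sum_pow_eq_sum_piAntidiag]
  refine Finset.sum_congr rfl fun d _ => ?_
  rw [prodXpow, ← map_natCast (MvPolynomial.C (σ := Fin n) (R := ℝ)),
    MvPolynomial.C_mul_monomial, mul_one]

lemma Lf_Spow (n m : ℕ) (F : (Fin n → ℕ) → ℝ) :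
    Lf n F ((∑ i, (X i : MvPolynomial (Fin n) ℝ)) ^ m) = canonSum n m F := by
  rw [Spow_repr, Lf_sum]
  exact Finset.sum_congr rfl fun d _ => by rw [Lf_monomial, coe_symm]

lemma conv (n m₁ m₂ : ℕ) (F : (Fin n → ℕ) → ℝ) :
    canonSum n (m₁ + m₂) F
      = canonSum n m₁ (fun d => canonSum n m₂ (fun e => F (d + e))) := by
  rw [← Lf_Spow, pow_add, Spow_repr n m₁, Spow_repr n m₂, Finset.sum_mul_sum, Lf_sum]
  unfold canonSum
  refine Finset.sum_congr rfl fun d _ => ?_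
  rw [Lf_sum, Finset.mul_sum]
  refine Finset.sum_congr rfl fun e _ => ?_
  rw [MvPolynomial.monomial_mul, Lf_monomial, Finsupp.coe_add, coe_symm, coe_symm, mul_assoc]


lemma canon0 (n : ℕ) (F : (Fin n → ℕ) → ℝ) : canonSum n 0 F = F 0 := by
  have h := Lf_Spow n 0 F
  rw [pow_zero] at h
  rw [← h, show (1 : MvPolynomial (Fin n) ℝ) = monomial 0 1 by
    rw [MvPolynomial.monomial_zero', MvPolynomial.C_1], Lf_monomial, one_mul]
  rfl

lemma canon1 (n : ℕ) (F : (Fin n → ℕ) → ℝ) :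
    canonSum n 1 F = ∑ i, F (fun j => if j = i then 1 else 0) := by
  have h := Lf_Spow n 1 F
  rw [pow_one, Lf_sum] at h
  rw [← h]
  refine Finset.sum_congr rfl fun i _ => ?_
  rw [show (X i : MvPolynomial (Fin n) ℝ) = monomial (Finsupp.single i 1) 1 from rfl,
    Lf_monomial, one_mul]
  congr 1
  funext j
  simp [Finsupp.single_apply, eq_comm]

lemma canon2 (n : ℕ) (F : (Fin n → ℕ) → ℝ) :
    canonSum n 2 F = ∑ i, ∑ i',
      F (fun j => (if j = i then 1 else 0) + (if j = i' then 1 else 0)) := by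
  rw [show (2 : ℕ) = 1 + 1 from rfl, conv, canon1]
  refine Finset.sum_congr rfl fun i _ => ?_
  rw [canon1]
  exact Finset.sum_congr rfl fun i' _ => rfl

lemma canon_congr {n m : ℕ} {F G : (Fin n → ℕ) → ℝ} (h : ∀ d, F d = G d) :
    canonSum n m F = canonSum n m G :=
  Finset.sum_congr rfl fun d _ => by rw [h d]

lemma bridge {n t m : ℕ} (hm : m ≤ t) (F : (Fin n → ℕ) → ℝ) :
    (∑ γ : MIdx n t, cc n m γ.1 * F γ.1) = canonSum n m F := by
  classical
  have h1 : (∑ γ : MIdx n t, cc n m γ.1 * F γ.1)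
      = ∑ γ ∈ Finset.univ.filter (fun γ : MIdx n t => ∑ i, γ.1 i = m),
          (Nat.multinomial Finset.univ γ.1 : ℝ) * F γ.1 := by
    rw [Finset.sum_filter]
    exact Finset.sum_congr rfl fun γ _ => by rw [cc, ite_mul, zero_mul]
  rw [h1]
  unfold canonSum
  refine Finset.sum_bij' (fun γ _ => γ.1)
    (fun d hd => (⟨d, ?_⟩ : MIdx n t)) ?_ ?_ ?_ ?_ ?_
  · rw [Finset.mem_piAntidiag] at hd
    exact hd.1 ▸ hm
  · intro γ hγ
    rw [Finset.mem_filter] at hγ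
    rw [Finset.mem_piAntidiag]
    exact ⟨hγ.2, fun i _ => Finset.mem_univ i⟩
  · intro d hd
    rw [Finset.mem_piAntidiag] at hd
    simp only [Finset.mem_filter, Finset.mem_univ, true_and]
    exact hd.1
  · intro γ _; rfl
  · intro d _; rfl
  · intro γ _; rfl

lemma master {n t₁ t₂ m₁ m₂ : ℕ} (h₁ : m₁ ≤ t₁) (h₂ : m₂ ≤ t₂) (F : (Fin n → ℕ) → ℝ) :
    (∑ α : MIdx n t₁, ∑ β : MIdx n t₂,
        cc n m₁ α.1 * cc n m₂ β.1 * F (fun j => α.1 j + β.1 j))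
      = canonSum n (m₁ + m₂) F := by
  rw [conv, ← bridge h₁]
  refine Finset.sum_congr rfl fun α _ => ?_
  rw [← bridge h₂ (F := fun e => F (α.1 + e)), Finset.mul_sum]
  exact Finset.sum_congr rfl fun β _ => by rw [mul_assoc]; rfl

lemma qform {ι : Type*} [Fintype ι] {M : Matrix ι ι ℝ} (h : M.PosSemidef) (v : ι → ℝ) :
    0 ≤ ∑ α, ∑ β, v α * v β * M α β := by
  have h2 := h.dotProduct_mulVec_nonneg v
  simp only [dotProduct, Matrix.mulVec, Pi.star_apply, star_trivial] at h2
  calc (0:ℝ) ≤ ∑ α, v α * ∑ β, M α β * v β := h2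
    _ = ∑ α, ∑ β, v α * v β * M α β := by
      refine Finset.sum_congr rfl fun α _ => ?_
      rw [Finset.mul_sum]
      exact Finset.sum_congr rfl fun β _ => by ring

lemma diag_nonneg {ι : Type*} [Fintype ι] [DecidableEq ι] {M : Matrix ι ι ℝ}
    (h : M.PosSemidef) (i : ι) : 0 ≤ M i i := by
  have h2 := h.dotProduct_mulVec_nonneg (Pi.single i 1)
  simpa [dotProduct, Matrix.mulVec, Pi.single_apply, mul_ite, ite_mul,
    Finset.sum_ite_eq, Finset.sum_ite_eq'] using h2

end Stmt14Aux

/-- The moment matrix `M_k(y)`, indexed by `ℕ^n_k`, with `(α,β)` entry `y_{α+β}`. -/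
noncomputable def momMatY (n k : ℕ) (y : (Fin n → ℕ) → ℝ) :
    Matrix (MIdx n k) (MIdx n k) ℝ :=
  Matrix.of fun α β => y (fun j => α.1 j + β.1 j)

/-- The localizing matrix `M_{k−u}(x^α · y)`, indexed by `ℕ^n_{k−u}`, with `(β,δ)` entry
`y_{β+δ+α}`. -/
noncomputable def locMono (n k u : ℕ) (α : Fin n → ℕ) (y : (Fin n → ℕ) → ℝ) :
    Matrix (MIdx n (k - u)) (MIdx n (k - u)) ℝ :=
  Matrix.of fun β δ => y (fun j => β.1 j + δ.1 j + α j)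

/-- The localizing matrix `M_{k−1}((r − (x₁+⋯+xₙ))·y)`, with `(α,β)` entry
`r·y_{α+β} − Σᵢ y_{α+β+eᵢ}`. -/
noncomputable def locSimplex1 (n k : ℕ) (r : ℝ) (y : (Fin n → ℕ) → ℝ) :
    Matrix (MIdx n (k - 1)) (MIdx n (k - 1)) ℝ :=
  Matrix.of fun α β =>
    r * y (fun j => α.1 j + β.1 j)
      - ∑ i : Fin n, y (fun j => α.1 j + β.1 j + if j = i then 1 else 0)

/-- The localizing matrix `M_{k−1}((r² − (x₁+⋯+xₙ)²)·y)`, with `(α,β)` entry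
`r²·y_{α+β} − Σᵢ Σᵢ' y_{α+β+eᵢ+eᵢ'}`. -/
noncomputable def locSimplex2 (n k : ℕ) (r : ℝ) (y : (Fin n → ℕ) → ℝ) :
    Matrix (MIdx n (k - 1)) (MIdx n (k - 1)) ℝ :=
  Matrix.of fun α β =>
    r ^ 2 * y (fun j => α.1 j + β.1 j)
      - ∑ i : Fin n, ∑ i' : Fin n,
          y (fun j => α.1 j + β.1 j + (if j = i then 1 else 0) + (if j = i' then 1 else 0))

/-- Under `y₀ = 1`, `M_k(y) ⪰ 0`, PSD-ness of the localizing matrices of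
the monomials `x^α` (`α ∈ {0,1}^n \ {0}`), of `r − Σxᵢ`, and of `r² − (Σxᵢ)²` with
`r ∈ (0,1)`: `L_y(r^j − (x₁+⋯+xₙ)^j) ≥ 0` for `j = 1,…,2k`, and
`Σ_{γ∈ℕ^n_{2k}, γ≠0} y_γ ≤ r/(1−r)`. -/
theorem stmt14 (n k : ℕ) (hk : 1 ≤ k) (r : ℝ) (hr0 : 0 < r) (hr1 : r < 1)
    (y : (Fin n → ℕ) → ℝ) (hy0 : y 0 = 1)
    (hmom : (momMatY n k y).PosSemidef)
    (hlocα : ∀ α : Fin n → ℕ, (∀ i, α i ≤ 1) → α ≠ 0 → (∑ i, α i + 1) / 2 ≤ k →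
      (locMono n k ((∑ i, α i + 1) / 2) α y).PosSemidef)
    (hloc1 : (locSimplex1 n k r y).PosSemidef)
    (hloc2 : (locSimplex2 n k r y).PosSemidef) :
    (∀ j : ℕ, 1 ≤ j → j ≤ 2 * k →
      0 ≤ r ^ j * y 0
        - ∑ γ ∈ Finset.univ.filter (fun γ : MIdx n (2 * k) => ∑ i, γ.1 i = j),
            (Nat.multinomial Finset.univ γ.1 : ℝ) * y γ.1) ∧
    ∑ γ ∈ Finset.univ.filter (fun γ : MIdx n (2 * k) => γ.1 ≠ 0), y γ.1 ≤ r / (1 - r) := by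
  classical
  have hA0 : Stmt14Aux.canonSum n 0 y = 1 := by rw [Stmt14Aux.canon0]; exact hy0
  -- nonnegativity of all moments
  have ynn : ∀ γ : Fin n → ℕ, (∑ i, γ i) ≤ 2 * k → 0 ≤ y γ := by
    intro γ hγ
    have hsum2 : ∑ i, γ i = 2 * (∑ i, γ i / 2) + ∑ i, γ i % 2 := by
      rw [Finset.mul_sum, ← Finset.sum_add_distrib]
      exact Finset.sum_congr rfl fun i _ => by omega
    by_cases hα : (fun i => γ i % 2) = (0 : Fin n → ℕ)
    · have hz : ∑ i, γ i % 2 = 0 := Finset.sum_eq_zero fun i _ => congrFun hα i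
      have hβk : ∑ i, (γ i / 2) ≤ k := by omega
      have hdg := Stmt14Aux.diag_nonneg hmom (⟨fun i => γ i / 2, hβk⟩ : MIdx n k)
      have hdg' : 0 ≤ y (fun j => γ j / 2 + γ j / 2) := hdg
      have harg : (fun j => γ j / 2 + γ j / 2) = γ := funext fun j => by
        have := congrFun hα j
        simp only [Pi.zero_apply] at this
        omega
      exact harg ▸ hdg'
    · have hαs : 1 ≤ ∑ i, γ i % 2 := by
        rcases Function.ne_iff.mp hα with ⟨i, hi⟩
        simp only [Pi.zero_apply] at hi
        calc 1 ≤ γ i % 2 := by omega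
          _ ≤ ∑ i, γ i % 2 :=
            Finset.single_le_sum (f := fun j => γ j % 2) (fun j _ => Nat.zero_le _)
              (Finset.mem_univ i)
      have hu : ((∑ i, γ i % 2) + 1) / 2 ≤ k := by omega
      have hβ : ∑ i, (γ i / 2) ≤ k - ((∑ i, γ i % 2) + 1) / 2 := by omega
      have hpsd := hlocα (fun i => γ i % 2) (fun i => Nat.le_of_lt_succ (Nat.mod_lt (γ i) (by norm_num))) hα hu
      have hdg := Stmt14Aux.diag_nonneg hpsd
        (⟨fun i => γ i / 2, hβ⟩ : MIdx n (k - ((∑ i, γ i % 2) + 1) / 2))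
      have hdg' : 0 ≤ y (fun j => γ j / 2 + γ j / 2 + γ j % 2) := hdg
      have harg : (fun j => γ j / 2 + γ j / 2 + γ j % 2) = γ := funext fun j => by omega
      exact harg ▸ hdg'
  -- step inequalities
  have hstep1 : ∀ m, m ≤ k - 1 →
      Stmt14Aux.canonSum n (2*m+1) y ≤ r * Stmt14Aux.canonSum n (2*m) y := by
    intro m hm
    have hq := Stmt14Aux.qform hloc1 (fun α : MIdx n (k-1) => Stmt14Aux.cc n m α.1)
    have e1 : (∑ α : MIdx n (k-1), ∑ β : MIdx n (k-1),
        Stmt14Aux.cc n m α.1 * Stmt14Aux.cc n m β.1 * y (fun j => α.1 j + β.1 j))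
        = Stmt14Aux.canonSum n (2*m) y := by
      rw [Stmt14Aux.master hm hm y, ← two_mul]
    have e2 : (∑ α : MIdx n (k-1), ∑ β : MIdx n (k-1),
        Stmt14Aux.cc n m α.1 * Stmt14Aux.cc n m β.1 *
          (∑ i, y (fun j => α.1 j + β.1 j + if j = i then 1 else 0)))
        = Stmt14Aux.canonSum n (2*m+1) y := by
      have hmas := Stmt14Aux.master hm hm
        (F := fun g => ∑ i, y (fun j => g j + if j = i then 1 else 0))
      have hc : Stmt14Aux.canonSum n (m+m)
          (fun g => ∑ i, y (fun j => g j + if j = i then 1 else 0))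
          = Stmt14Aux.canonSum n (2*m+1) y := by
        have h1 : Stmt14Aux.canonSum n (m+m)
            (fun g => ∑ i, y (fun j => g j + if j = i then 1 else 0))
            = Stmt14Aux.canonSum n (m+m)
                (fun d => Stmt14Aux.canonSum n 1 (fun e => y (d + e))) :=
          Stmt14Aux.canon_congr fun d => by
            rw [Stmt14Aux.canon1]
            exact Finset.sum_congr rfl fun i _ => rfl
        rw [h1, ← Stmt14Aux.conv n (m+m) 1 y, show (m+m)+1 = 2*m+1 by ring]
      exact hmas.trans hc
    have hsplit : (∑ α : MIdx n (k-1), ∑ β : MIdx n (k-1),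
        Stmt14Aux.cc n m α.1 * Stmt14Aux.cc n m β.1 * locSimplex1 n k r y α β)
        = r * Stmt14Aux.canonSum n (2*m) y - Stmt14Aux.canonSum n (2*m+1) y := by
      rw [← e1, ← e2, Finset.mul_sum, ← Finset.sum_sub_distrib]
      refine Finset.sum_congr rfl fun α _ => ?_
      rw [Finset.mul_sum, ← Finset.sum_sub_distrib]
      refine Finset.sum_congr rfl fun β _ => ?_
      simp only [locSimplex1, Matrix.of_apply]
      ring
    rw [hsplit] at hq
    linarith
  have hstep2 : ∀ m, m ≤ k - 1 →
      Stmt14Aux.canonSum n (2*m+2) y ≤ r^2 * Stmt14Aux.canonSum n (2*m) y := by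
    intro m hm
    have hq := Stmt14Aux.qform hloc2 (fun α : MIdx n (k-1) => Stmt14Aux.cc n m α.1)
    have e1 : (∑ α : MIdx n (k-1), ∑ β : MIdx n (k-1),
        Stmt14Aux.cc n m α.1 * Stmt14Aux.cc n m β.1 * y (fun j => α.1 j + β.1 j))
        = Stmt14Aux.canonSum n (2*m) y := by
      rw [Stmt14Aux.master hm hm y, ← two_mul]
    have e2 : (∑ α : MIdx n (k-1), ∑ β : MIdx n (k-1),
        Stmt14Aux.cc n m α.1 * Stmt14Aux.cc n m β.1 *
          (∑ i, ∑ i', y (fun j => α.1 j + β.1 j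
            + (if j = i then 1 else 0) + (if j = i' then 1 else 0))))
        = Stmt14Aux.canonSum n (2*m+2) y := by
      have hmas := Stmt14Aux.master hm hm
        (F := fun g => ∑ i, ∑ i', y (fun j => g j
          + (if j = i then 1 else 0) + (if j = i' then 1 else 0)))
      have hc : Stmt14Aux.canonSum n (m+m)
          (fun g => ∑ i, ∑ i', y (fun j => g j
            + (if j = i then 1 else 0) + (if j = i' then 1 else 0)))
          = Stmt14Aux.canonSum n (2*m+2) y := by
        have h1 : Stmt14Aux.canonSum n (m+m)
            (fun g => ∑ i, ∑ i', y (fun j => g j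
              + (if j = i then 1 else 0) + (if j = i' then 1 else 0)))
            = Stmt14Aux.canonSum n (m+m)
                (fun d => Stmt14Aux.canonSum n 2 (fun e => y (d + e))) :=
          Stmt14Aux.canon_congr fun d => by
            rw [Stmt14Aux.canon2]
            refine Finset.sum_congr rfl fun i _ => Finset.sum_congr rfl fun i' _ => ?_
            exact congrArg y (funext fun j => add_assoc _ _ _)
        rw [h1, ← Stmt14Aux.conv n (m+m) 2 y, show (m+m)+2 = 2*m+2 by ring]
      exact hmas.trans hc
    have hsplit : (∑ α : MIdx n (k-1), ∑ β : MIdx n (k-1),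
        Stmt14Aux.cc n m α.1 * Stmt14Aux.cc n m β.1 * locSimplex2 n k r y α β)
        = r^2 * Stmt14Aux.canonSum n (2*m) y - Stmt14Aux.canonSum n (2*m+2) y := by
      rw [← e1, ← e2, Finset.mul_sum, ← Finset.sum_sub_distrib]
      refine Finset.sum_congr rfl fun α _ => ?_
      rw [Finset.mul_sum, ← Finset.sum_sub_distrib]
      refine Finset.sum_congr rfl fun β _ => ?_
      simp only [locSimplex2, Matrix.of_apply]
      ring
    rw [hsplit] at hq
    linarith
  -- the chain
  have heven : ∀ m, 2*m ≤ 2*k → Stmt14Aux.canonSum n (2*m) y ≤ r^(2*m) := by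
    intro m
    induction m with
    | zero => intro _; simpa using hA0.le
    | succ m ih =>
      intro h
      have hm : m ≤ k - 1 := by omega
      calc Stmt14Aux.canonSum n (2*(m+1)) y
          = Stmt14Aux.canonSum n (2*m+2) y := by rw [show 2*(m+1) = 2*m+2 by ring]
        _ ≤ r^2 * Stmt14Aux.canonSum n (2*m) y := hstep2 m hm
        _ ≤ r^2 * r^(2*m) := by
            have := ih (by omega)
            nlinarith [sq_nonneg r]
        _ = r^(2*(m+1)) := by ring
  have hall : ∀ j, 1 ≤ j → j ≤ 2*k → Stmt14Aux.canonSum n j y ≤ r^j := by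
    intro j hj1 hj2
    rcases Nat.even_or_odd j with ⟨m, hm⟩ | ⟨m, hm⟩
    · subst hm
      have := heven m (by omega)
      rw [two_mul] at this
      exact this
    · subst hm
      have h1 := hstep1 m (by omega)
      have h2 := heven m (by omega)
      calc Stmt14Aux.canonSum n (2*m+1) y ≤ r * Stmt14Aux.canonSum n (2*m) y := h1
        _ ≤ r * r^(2*m) := by nlinarith
        _ = r^(2*m+1) := by ring
  have hsumA : ∀ j, j ≤ 2*k →
      (∑ γ ∈ Finset.univ.filter (fun γ : MIdx n (2*k) => ∑ i, γ.1 i = j),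
        (Nat.multinomial Finset.univ γ.1 : ℝ) * y γ.1) = Stmt14Aux.canonSum n j y := by
    intro j hj
    calc (∑ γ ∈ Finset.univ.filter (fun γ : MIdx n (2*k) => ∑ i, γ.1 i = j),
        (Nat.multinomial Finset.univ γ.1 : ℝ) * y γ.1)
        = ∑ γ : MIdx n (2*k), Stmt14Aux.cc n j γ.1 * y γ.1 := by
          rw [Finset.sum_filter]
          exact Finset.sum_congr rfl fun γ _ => by
            simp only [Stmt14Aux.cc, ite_mul, zero_mul]
      _ = Stmt14Aux.canonSum n j y := Stmt14Aux.bridge hj y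
  constructor
  · intro j hj1 hj2
    rw [hy0, mul_one, hsumA j hj2]
    have := hall j hj1 hj2
    linarith
  · have hmaps : ∀ γ ∈ Finset.univ.filter (fun γ : MIdx n (2*k) => γ.1 ≠ 0),
        (∑ i, γ.1 i) ∈ Finset.Icc 1 (2*k) := by
      intro γ hγ
      rw [Finset.mem_filter] at hγ
      rw [Finset.mem_Icc]
      refine ⟨?_, γ.2⟩
      rcases Function.ne_iff.mp hγ.2 with ⟨i, hi⟩
      simp only [Pi.zero_apply] at hi
      calc 1 ≤ γ.1 i := by omega
        _ ≤ ∑ i, γ.1 i :=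
          Finset.single_le_sum (f := fun j => γ.1 j) (fun j _ => Nat.zero_le _)
            (Finset.mem_univ i)
    have geo : ∑ j ∈ Finset.Icc 1 (2*k), r^j ≤ r / (1-r) := by
      have h1r : (0:ℝ) < 1 - r := by linarith
      have hrew : ∑ j ∈ Finset.Icc 1 (2*k), r^j
          = r * ∑ j ∈ Finset.range (2*k), r^j := by
        rw [← Finset.Ico_add_one_right_eq_Icc, Finset.sum_Ico_eq_sum_range, Finset.mul_sum]
        refine Finset.sum_congr (by norm_num) fun i _ => by rw [pow_add, pow_one]
      rw [hrew, geom_sum_eq (by linarith : r ≠ 1)]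
      have hpow : (0:ℝ) ≤ r^(2*k) := pow_nonneg hr0.le _
      rw [show (r^(2*k) - 1)/(r - 1) = (1 - r^(2*k))/(1-r) by
        rw [div_eq_div_iff (by linarith) (by linarith)]; ring]
      calc r * ((1 - r^(2*k))/(1-r)) ≤ r * (1/(1-r)) := by
            refine mul_le_mul_of_nonneg_left ?_ hr0.le
            exact (div_le_div_iff_of_pos_right h1r).mpr (by linarith)
        _ = r / (1-r) := by rw [mul_one_div]
    calc ∑ γ ∈ Finset.univ.filter (fun γ : MIdx n (2*k) => γ.1 ≠ 0), y γ.1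
        ≤ ∑ γ ∈ Finset.univ.filter (fun γ : MIdx n (2*k) => γ.1 ≠ 0),
            (Nat.multinomial Finset.univ γ.1 : ℝ) * y γ.1 := by
          refine Finset.sum_le_sum fun γ _ => ?_
          refine le_mul_of_one_le_left (ynn γ.1 γ.2) ?_
          exact_mod_cast Nat.succ_le_of_lt (Nat.multinomial_pos _ _)
      _ = ∑ j ∈ Finset.Icc 1 (2*k), ∑ γ ∈ (Finset.univ.filter
            (fun γ : MIdx n (2*k) => γ.1 ≠ 0)).filter (fun γ => ∑ i, γ.1 i = j),
            (Nat.multinomial Finset.univ γ.1 : ℝ) * y γ.1 :=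
          (Finset.sum_fiberwise_of_maps_to hmaps _).symm
      _ = ∑ j ∈ Finset.Icc 1 (2*k), Stmt14Aux.canonSum n j y := by
          refine Finset.sum_congr rfl fun j hj => ?_
          rw [Finset.mem_Icc] at hj
          rw [Finset.filter_filter]
          have hset : Finset.univ.filter
              (fun γ : MIdx n (2*k) => γ.1 ≠ 0 ∧ ∑ i, γ.1 i = j)
              = Finset.univ.filter (fun γ : MIdx n (2*k) => ∑ i, γ.1 i = j) := by
            refine Finset.filter_congr fun γ _ => ?_
            constructor
            · exact fun h => h.2
            · intro h
              refine ⟨fun h0 => ?_, h⟩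
              rw [h0] at h
              simp only [Pi.zero_apply, Finset.sum_const_zero] at h
              omega
          rw [hset, hsumA j hj.2]
      _ ≤ ∑ j ∈ Finset.Icc 1 (2*k), r^j := by
          refine Finset.sum_le_sum fun j hj => ?_
          rw [Finset.mem_Icc] at hj
          exact hall j hj.1 hj.2
      _ ≤ r / (1-r) := geo
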